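/- Let f'_{abc} (a,b,c ∈ {1,…,r}) be real constants with f'_{abc} = −f'_{bac}, and let t_a, t'_a, s_a, s'_a be N×N complex matrices with t_a^ε := t_a + ε t'_a and s_a^ε := s_a + ε s'_a for ε ∈ {+1,−1}. Then the following are equivalent: (i) for all a,b, [t_a, s_b] − {t'_a, s'_b} = −i Σ_c f'_{cba} s_c and [t_a, s'_b] − {t'_a, s_b} = −i Σ_c f'_{cba} s'_c; (ii) for all a,b, t_a^− s_b^+ − s_b^+ t_a^+ = i Σ_c f'_{bca} s_c^+ and t_a^+ s_b^− − s_b^− t_a^− = i Σ_c f'_{bca} s_c^−. -/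
import Mathlib


/-- The second-order anomaly cancellation condition in the sector `u Φ ψ̄ ψ` is equivalent
to the tensor-operator property of the chiral scalar couplings `s_a^ε = s_a + ε s'_a`
with respect to the chiral representations `t_a^ε = t_a + ε t'_a`. -/
theorem stmt_6 (r N : ℕ) (f' : Fin r → Fin r → Fin r → ℝ)
    (hanti : ∀ a b c, f' a b c = - f' b a c)
    (t t' s s' : Fin r → Matrix (Fin N) (Fin N) ℂ) :
    ((∀ a b,
        (t a * s b - s b * t a) - (t' a * s' b + s' b * t' a) =
          - Complex.I • ∑ c, ((f' c b a : ℂ) • s c) ∧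
        (t a * s' b - s' b * t a) - (t' a * s b + s b * t' a) =
          - Complex.I • ∑ c, ((f' c b a : ℂ) • s' c)) ↔
     (∀ a b,
        (t a - t' a) * (s b + s' b) - (s b + s' b) * (t a + t' a) =
          Complex.I • ∑ c, ((f' b c a : ℂ) • (s c + s' c)) ∧
        (t a + t' a) * (s b - s' b) - (s b - s' b) * (t a - t' a) =
          Complex.I • ∑ c, ((f' b c a : ℂ) • (s c - s' c)))) := by
  constructor
  · intro h a b
    obtain ⟨h1, h2⟩ := h a b
    constructor
    · have key : (t a - t' a) * (s b + s' b) - (s b + s' b) * (t a + t' a) =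
        ((t a * s b - s b * t a) - (t' a * s' b + s' b * t' a)) +
        ((t a * s' b - s' b * t a) - (t' a * s b + s b * t' a)) := by noncomm_ring
      rw [key, h1, h2, Finset.smul_sum, Finset.smul_sum, Finset.smul_sum,
        ← Finset.sum_add_distrib]
      refine Finset.sum_congr rfl fun c _ => ?_
      rw [hanti b c a]; push_cast; module
    · have key : (t a + t' a) * (s b - s' b) - (s b - s' b) * (t a - t' a) =
        ((t a * s b - s b * t a) - (t' a * s' b + s' b * t' a)) -
        ((t a * s' b - s' b * t a) - (t' a * s b + s b * t' a)) := by noncomm_ring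
      rw [key, h1, h2, Finset.smul_sum, Finset.smul_sum, Finset.smul_sum,
        ← Finset.sum_sub_distrib]
      refine Finset.sum_congr rfl fun c _ => ?_
      rw [hanti b c a]; push_cast; module
  · intro h a b
    obtain ⟨h1, h2⟩ := h a b
    constructor
    · apply smul_right_injective (Matrix (Fin N) (Fin N) ℂ) (two_ne_zero (α := ℂ))
      have key : (2:ℂ) • ((t a * s b - s b * t a) - (t' a * s' b + s' b * t' a)) =
        ((t a - t' a) * (s b + s' b) - (s b + s' b) * (t a + t' a)) +
        ((t a + t' a) * (s b - s' b) - (s b - s' b) * (t a - t' a)) := by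
        rw [two_smul]; noncomm_ring
      show (2:ℂ) • _ = (2:ℂ) • _
      rw [key, h1, h2, Finset.smul_sum, Finset.smul_sum, Finset.smul_sum, Finset.smul_sum,
        ← Finset.sum_add_distrib]
      refine Finset.sum_congr rfl fun c _ => ?_
      rw [hanti b c a]; push_cast; module
    · apply smul_right_injective (Matrix (Fin N) (Fin N) ℂ) (two_ne_zero (α := ℂ))
      have key : (2:ℂ) • ((t a * s' b - s' b * t a) - (t' a * s b + s b * t' a)) =
        ((t a - t' a) * (s b + s' b) - (s b + s' b) * (t a + t' a)) -
        ((t a + t' a) * (s b - s' b) - (s b - s' b) * (t a - t' a)) := by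
        rw [two_smul]; noncomm_ring
      show (2:ℂ) • _ = (2:ℂ) • _
      rw [key, h1, h2, Finset.smul_sum, Finset.smul_sum, Finset.smul_sum, Finset.smul_sum,
        ← Finset.sum_sub_distrib]
      refine Finset.sum_congr rfl fun c _ => ?_
      rw [hanti b c a]; push_cast; module
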